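/- Let f : ℤ → F_p satisfy f(k+r) = -f(k) - f(k+1) with f(0)=1, f(1)=...=f(r-1)=0, where r = p^t + 1 for t ≥ 1, and let n = r(r-1)+1. Then f(k)·f(-k) = 0 for every integer k not divisible by n. -/

import Mathlib

private lemma rec_zero {M : Type*} [AddCommGroup M] (r : ℕ) (hr : 2 ≤ r) (h : ℤ → M)
    (hrec : ∀ k : ℤ, h (k + r) = -h k - h (k + 1))
    (h0 : ∀ i : ℤ, 0 ≤ i → i < (r : ℤ) → h i = 0) : ∀ k, h k = 0 := by
  have main : ∀ m : ℕ, ∀ k : ℤ, -(m : ℤ) ≤ k → k < (r : ℤ) + m → h k = 0 := by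
    intro m
    induction m with
    | zero => intro k h1 h2; exact h0 k (by omega) (by omega)
    | succ m ih =>
      intro k h1 h2
      rcases lt_or_ge k (-(m : ℤ)) with hlt | hge
      · have e0 := hrec k
        have e1 : h (k + r) = 0 := ih _ (by omega) (by omega)
        have e2 : h (k + 1) = 0 := ih _ (by omega) (by omega)
        rw [e1, e2] at e0
        have : (0:M) = -h k - 0 := e0
        simpa using this.symm
      · rcases lt_or_ge k ((r : ℤ) + m) with hlt2 | hge2
        · exact ih k hge hlt2
        · have hk : k = (m : ℤ) + r := by omega
          have e0 := hrec (m : ℤ)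
          have e1 : h (m : ℤ) = 0 := ih _ (by omega) (by omega)
          have e2 : h ((m : ℤ) + 1) = 0 := ih _ (by omega) (by omega)
          rw [hk, e0, e1, e2]
          abel
  intro k
  exact main (k.natAbs + r) k (by omega) (by omega)


open Polynomial Finset in
set_option maxHeartbeats 1000000 in
theorem key_lemma (p : ℕ) [Fact p.Prime] (t : ℕ) (ht : 1 ≤ t)
    (r n : ℕ) (hr : r = p ^ t + 1) (hn : n = r * (r - 1) + 1)
    (f : ℤ → ZMod p)
    (hrec : ∀ k : ℤ, f (k + r) = -f k - f (k + 1))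
    (h0 : f 0 = 1)
    (hinit : ∀ i : ℤ, 1 ≤ i → i ≤ (r : ℤ) - 1 → f i = 0) :
    ∀ k : ℤ, ¬ (n : ℤ) ∣ k → f k * f (-k) = 0 := by
  classical
  have hp : p.Prime := Fact.out
  set q : ℕ := p ^ t with hqdef
  have hq2 : 2 ≤ q := by
    calc 2 ≤ p := hp.two_le
    _ = p ^ 1 := (pow_one p).symm
    _ ≤ p ^ t := Nat.pow_le_pow_right hp.pos ht
  set K := AlgebraicClosure (ZMod p) with hK
  haveI : CharP K p := charP_of_injective_algebraMap (algebraMap (ZMod p) K).injective p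
  have hqK : (q : K) = 0 := by
    rw [hqdef]
    push_cast
    rw [CharP.cast_eq_zero K p]
    exact zero_pow (by omega)
  set g : K[X] := X ^ (q + 1) + X + 1 with hg
  have hX1 : (X + 1 : K[X]) = X + C 1 := by simp
  have hd1 : (X + 1 : K[X]).degree = 1 := by rw [hX1, degree_X_add_C]
  have hdlt : (X + 1 : K[X]).degree < (X ^ (q+1) : K[X]).degree := by
    rw [hd1, degree_X_pow]
    exact_mod_cast by omega
  have hgmonic : g.Monic := by
    have h1 : (X + 1 : K[X]).degree < (q + 1 : ℕ) := by
      rw [hd1]; exact_mod_cast by omega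
    have := monic_X_pow_add (R := K) (n := q + 1) h1
    rw [hg, add_assoc]
    exact this
  have hgdeg : g.natDegree = q + 1 := by
    rw [hg, add_assoc]
    rw [natDegree_add_eq_left_of_degree_lt hdlt]
    exact natDegree_X_pow _
  have hgsep : g.Separable := by
    have hder : g.derivative = X ^ q + 1 := by
      rw [hg]
      simp only [derivative_add, derivative_one, derivative_X, derivative_X_pow, add_zero]
      push_cast [hqK]
      simp
    refine ⟨1, -X, ?_⟩
    rw [hder, hg]
    ring
  have hg0 : g ≠ 0 := hgmonic.ne_zero
  set M : Multiset K := g.roots with hM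
  have hMcard : Multiset.card M = q + 1 := by
    rw [hM, ← hgdeg]
    exact (splits_iff_card_roots).mp (IsAlgClosed.splits g)
  have hMnodup : M.Nodup := nodup_roots hgsep
  have hroot : ∀ α ∈ M, α ^ (q + 1) = -(α + 1) := by
    intro α hα
    have := isRoot_of_mem_roots hα
    rw [hg] at this
    simp only [IsRoot, eval_add, eval_pow, eval_X, eval_one] at this
    linear_combination this
  have hne0 : ∀ α ∈ M, α ≠ 0 := by
    intro α hα h0
    have := hroot α hα
    rw [h0] at this
    simp at this
  have hFrob : ∀ x : K, ∀ c : K, (-(x + c)) ^ q = -(x ^ q + c ^ q) := by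
    intro x c
    have h1 : ∀ y : K, y ^ q = iterateFrobenius K p t y := by
      intro y; rw [iterateFrobenius_def, hqdef]
    rw [h1, h1, h1, map_neg, map_add]
  have hunit : ∀ α ∈ M, α ^ (q * (q + 1) + 1) = 1 := by
    intro α hα
    have h1 : α ^ (q * (q + 1) + 1) = ((α ^ (q+1)) ^ q) * α := by
      rw [← pow_mul]
      ring
    rw [h1, hroot α hα, hFrob α 1, one_pow]
    have h2 : (α ^ q) * α = α ^ (q + 1) := by ring
    rw [neg_mul, add_mul, h2, hroot α hα]
    ring
  set R : Finset K := M.toFinset with hR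
  have hRval : R.val = M := by
    rw [hR, Multiset.toFinset_val, Multiset.dedup_eq_self.mpr hMnodup]
  have hRcard : R.card = q + 1 := by rw [Finset.card_def, hRval, hMcard]
  have hV : (M.map fun a => X - C a).prod = g :=
    prod_multiset_X_sub_C_of_monic_of_roots_card_eq hgmonic (by rw [hMcard, hgdeg])
  have hesymm : ∀ j : ℕ, 1 ≤ j → j ≤ q - 1 → M.esymm j = 0 := by
    intro j h1 h2
    have := Multiset.prod_X_sub_C_coeff M (k := q + 1 - j) (by rw [hMcard]; omega)
    rw [hV, hMcard] at this
    have hj' : q + 1 - (q + 1 - j) = j := by omega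
    rw [hj'] at this
    have hcoeff : g.coeff (q + 1 - j) = 0 := by
      rw [hg]
      simp only [coeff_add, coeff_X_pow, coeff_X, coeff_one]
      split_ifs with h h' h'' <;> first | (exfalso; omega) | simp
    rw [hcoeff] at this
    rcases mul_eq_zero.mp this.symm with h | h
    · exact absurd h (pow_ne_zero _ (by norm_num))
    · exact h
  have hps : ∀ m : ℕ, 1 ≤ m → m ≤ q → (∑ α ∈ R, α ^ m) = 0 := by
    intro m h1 h2
    have hN := MvPolynomial.psum_eq_mul_esymm_sub_sum (↥R) K m (by omega)
    have hEq := congrArg (MvPolynomial.aeval (fun i : ↥R => (i : K))) hN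
    have hesymmEval : ∀ j : ℕ, (MvPolynomial.aeval (fun i : ↥R => (i : K)))
        (MvPolynomial.esymm (↥R) K j) = M.esymm j := by
      intro j
      rw [MvPolynomial.aeval_esymm_eq_multiset_esymm]
      congr 1
      rw [← hRval]
      exact Multiset.attach_map_val R.val
    have hpsumEval : ∀ j : ℕ, (MvPolynomial.aeval (fun i : ↥R => (i : K)))
        (MvPolynomial.psum (↥R) K j) = ∑ α ∈ R, α ^ j := by
      intro j
      rw [MvPolynomial.psum]
      simp only [map_sum, map_pow, MvPolynomial.aeval_X]
      exact Finset.sum_coe_sort R (fun α => α ^ j)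
    rw [hpsumEval, map_sub, map_mul, map_mul, map_pow, map_neg, map_one, map_natCast,
      hesymmEval, map_sum] at hEq
    rw [hEq]
    have hsum0 : ∑ x ∈ Finset.filter (fun a => a.1 ∈ Set.Ioo 0 m) (Finset.HasAntidiagonal.antidiagonal m),
        (MvPolynomial.aeval fun i : ↥R => (i : K))
          ((-1) ^ x.1 * MvPolynomial.esymm (↥R) K x.1 * MvPolynomial.psum (↥R) K x.2) = 0 := by
      refine Finset.sum_eq_zero ?_
      intro a ha
      simp only [Finset.mem_filter, Finset.mem_antidiagonal, Set.mem_Ioo] at ha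
      rw [map_mul, map_mul, hesymmEval]
      rw [hesymm a.1 (by omega) (by omega)]
      ring
    rw [hsum0, sub_zero]
    rcases Nat.lt_or_ge m q with hlt | hge
    · rw [hesymm m (by omega) (by omega)]
      ring
    · have hm : m = q := by omega
      rw [hm, hqK]
      ring
  have hmemR : ∀ α : K, α ∈ R ↔ α ∈ M := fun α => Multiset.mem_toFinset
  set S : ℤ → K := fun j => ∑ α ∈ R, α ^ j with hS
  have hSrec : ∀ j : ℤ, S (j + ((q : ℤ) + 1)) = -S j - S (j + 1) := by
    intro j
    have hterm : ∀ α ∈ R, α ^ (j + ((q : ℤ) + 1)) = -(α ^ j) - α ^ (j + 1) := by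
      intro α hα
      have hα0 : α ≠ 0 := hne0 α ((hmemR α).mp hα)
      have h1 : α ^ (j + ((q : ℤ) + 1)) = α ^ j * α ^ (((q + 1 : ℕ) : ℤ)) := by
        rw [← zpow_add₀ hα0]
        norm_num
      rw [h1, zpow_natCast, hroot α ((hmemR α).mp hα)]
      have h2 : α ^ (j + 1) = α ^ j * α := by
        rw [zpow_add₀ hα0, zpow_one]
      rw [h2]
      ring
    rw [hS]
    simp only
    rw [Finset.sum_congr rfl hterm, Finset.sum_sub_distrib]
    simp [Finset.sum_neg_distrib]
  have hS0 : S 0 = 1 := by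
    rw [hS]
    simp only [zpow_zero, Finset.sum_const, hRcard, nsmul_eq_mul, mul_one]
    push_cast [hqK]
    ring
  have hSinit : ∀ i : ℤ, 1 ≤ i → i ≤ (q : ℤ) → S i = 0 := by
    intro i h1 h2
    have hi : i = ((i.toNat : ℕ) : ℤ) := by omega
    rw [hS]
    simp only
    rw [hi]
    have : ∀ α ∈ R, α ^ ((i.toNat : ℕ) : ℤ) = α ^ (i.toNat) := fun α _ => zpow_natCast α _
    rw [Finset.sum_congr rfl this]
    exact hps i.toNat (by omega) (by omega)
  set n' : ℕ := q * (q + 1) + 1 with hn'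
  have hmain : ∀ k : ℤ, ¬ ((n' : ℕ) : ℤ) ∣ k → S k * S (-k) = 0 := by
    intro k hk
    have hn'pos : 0 < n' := by omega
    have hnK : ((n' : ℕ) : K) = 1 := by
      rw [hn']
      push_cast [hqK]
      ring_nf
      simp [hqK]
    haveI : NeZero ((n' : ℕ) : K) := ⟨by rw [hnK]; exact one_ne_zero⟩
    obtain ⟨ζ, hζ⟩ := HasEnoughRootsOfUnity.exists_primitiveRoot K n'
    have hrootn : ∀ α ∈ M, α ^ n' = 1 := by
      intro α hα; rw [hn']; exact hunit α hα
    -- express the product as a sum over pairs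
    have hprod : S k * S (-k) = ∑ ab ∈ R ×ˢ R, (ab.1 * ab.2⁻¹) ^ k := by
      rw [hS]
      simp only
      rw [Finset.sum_mul_sum, Finset.sum_product]
      refine Finset.sum_congr rfl fun α hα => Finset.sum_congr rfl fun β hβ => ?_
      rw [mul_zpow, inv_zpow, ← zpow_neg]
    set D := Finset.filter (fun ab : K × K => ab.1 = ab.2) (R ×ˢ R) with hD
    set O := Finset.filter (fun ab : K × K => ¬ab.1 = ab.2) (R ×ˢ R) with hO
    have hsplit := Finset.sum_filter_add_sum_filter_not (R ×ˢ R)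
      (fun ab : K × K => ab.1 = ab.2) (fun ab : K × K => (ab.1 * ab.2⁻¹) ^ k)
    -- diagonal
    have hDimage : D = R.image (fun a => (a, a)) := by
      ext ab
      simp only [hD, Finset.mem_filter, Finset.mem_product, Finset.mem_image]
      constructor
      · rintro ⟨⟨h1, h2⟩, h3⟩
        exact ⟨ab.1, h1, Prod.ext rfl h3⟩
      · rintro ⟨a, ha, rfl⟩
        exact ⟨⟨ha, ha⟩, rfl⟩
    have hDcard : D.card = q + 1 := by
      rw [hDimage, Finset.card_image_of_injective _ (fun a b h => by simpa using h), hRcard]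
    have hDsum : ∑ ab ∈ D, (ab.1 * ab.2⁻¹) ^ k = 1 := by
      have h1 : ∀ ab ∈ D, (ab.1 * ab.2⁻¹) ^ k = 1 := by
        intro ab hab
        simp only [hD, Finset.mem_filter, Finset.mem_product] at hab
        have h0 : ab.1 ≠ 0 := hne0 _ ((hmemR _).mp hab.1.1)
        rw [← hab.2, mul_inv_cancel₀ h0, one_zpow]
      rw [Finset.sum_congr rfl h1, Finset.sum_const, hDcard]
      simp only [nsmul_eq_mul, mul_one]
      push_cast [hqK]
      ring
    -- off-diagonal
    have hOcard : O.card = n' - 1 := by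
      have h1 : D.card + O.card = (R ×ˢ R).card := by
        rw [hD, hO]
        exact Finset.card_filter_add_card_filter_not _
      rw [Finset.card_product, hRcard, hDcard] at h1
      have h2 : (q+1) * (q+1) = q * (q+1) + (q+1) := by ring
      omega
    -- key injectivity
    have hlin : ∀ x y : K, y ≠ 0 → (x * y⁻¹) * y = x := by
      intro x y hy0
      exact inv_mul_cancel_right₀ hy0 x
    have hkey : ∀ x y : K, x ∈ M → y ∈ M →
        y * ((x * y⁻¹) ^ (q + 1) - (x * y⁻¹)) = 1 - (x * y⁻¹) ^ (q + 1) := by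
      intro x y hx hy
      have hy0 : y ≠ 0 := hne0 y hy
      set c : K := x * y⁻¹ with hc
      have hxc : x = c * y := by rw [hc, hlin x y hy0]
      have h1 : c ^ (q+1) * y ^ (q+1) = -(c * y + 1) := by
        rw [← mul_pow, ← hxc, hroot x hx, hxc]
      rw [hroot y hy] at h1
      -- c^{q+1} * (-(y+1)) = -(c*y+1)
      linear_combination -h1
    have hinj : ∀ ab ∈ O, ∀ cd ∈ O, ab.1 * ab.2⁻¹ = cd.1 * cd.2⁻¹ → ab = cd := by
      intro ab hab cd hcd heq
      simp only [hO, Finset.mem_filter, Finset.mem_product] at hab hcd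
      obtain ⟨⟨ha1, ha2⟩, hane⟩ := hab
      obtain ⟨⟨hc1, hc2⟩, hcne⟩ := hcd
      rw [hmemR] at ha1 ha2 hc1 hc2
      set c : K := ab.1 * ab.2⁻¹ with hcdef
      have h1 := hkey ab.1 ab.2 ha1 ha2
      have h2 := hkey cd.1 cd.2 hc1 hc2
      rw [← heq] at h2
      have hcc : c ^ (q + 1) - c ≠ 0 := by
        intro h0
        have h3 : (1 : K) - c ^ (q+1) = 0 := by
          rw [← h1, h0, mul_zero]
        have h4 : c ^ (q + 1) = 1 := by linear_combination -h3
        have h5 : c = 1 := by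
          have := h0
          rw [h4] at this
          linear_combination -this
        have hb0 : ab.2 ≠ 0 := hne0 _ ha2
        apply hane
        have hx := (hlin ab.1 ab.2 hb0).symm
        rw [← hcdef, h5, one_mul] at hx
        exact hx
      have hyy : ab.2 = cd.2 := by
        have := h1.trans h2.symm
        exact mul_right_cancel₀ hcc this
      have hb0 : ab.2 ≠ 0 := hne0 _ ha2
      have hd0 : cd.2 ≠ 0 := hne0 _ hc2
      have hxx : ab.1 = cd.1 := by
        rw [← hlin ab.1 ab.2 hb0, ← hlin cd.1 cd.2 hd0, ← hcdef, heq, hyy]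
      exact Prod.ext hxx hyy
    have hOsub : O.image (fun ab : K × K => ab.1 * ab.2⁻¹) ⊆
        (Polynomial.nthRootsFinset n' (1 : K)).erase 1 := by
      intro x hx
      simp only [Finset.mem_image] at hx
      obtain ⟨ab, hab, rfl⟩ := hx
      simp only [hO, Finset.mem_filter, Finset.mem_product] at hab
      obtain ⟨⟨ha1, ha2⟩, hane⟩ := hab
      rw [hmemR] at ha1 ha2
      have hb0 : ab.2 ≠ 0 := hne0 _ ha2
      refine Finset.mem_erase.mpr ⟨?_, ?_⟩
      · intro h1
        apply hane
        have hx := (hlin ab.1 ab.2 hb0).symm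
        rw [h1, one_mul] at hx
        exact hx
      · rw [mem_nthRootsFinset hn'pos, mul_pow, inv_pow, hrootn ab.1 ha1,
          hrootn ab.2 ha2, inv_one, mul_one]
    have hOimage : O.image (fun ab : K × K => ab.1 * ab.2⁻¹) =
        (Polynomial.nthRootsFinset n' (1 : K)).erase 1 := by
      apply Finset.eq_of_subset_of_card_le hOsub
      rw [Finset.card_erase_of_mem (one_mem_nthRootsFinset hn'pos),
        hζ.card_nthRootsFinset, Finset.card_image_of_injOn (fun a ha b hb h => hinj a ha b hb h),
        hOcard]
    have hOsum : ∑ ab ∈ O, (ab.1 * ab.2⁻¹) ^ k =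
        ∑ x ∈ (Polynomial.nthRootsFinset n' (1 : K)).erase 1, x ^ k := by
      rw [← hOimage, Finset.sum_image hinj]
    -- sum over all n'-th roots of unity
    have hallsum : ∑ x ∈ Polynomial.nthRootsFinset n' (1 : K), x ^ k = 0 := by
      have himg : (Finset.range n').image (ζ ^ ·) = Polynomial.nthRootsFinset n' (1 : K) := by
        apply Finset.eq_of_subset_of_card_le
        · intro x hx
          simp only [Finset.mem_image, Finset.mem_range] at hx
          obtain ⟨i, hi, rfl⟩ := hx
          rw [mem_nthRootsFinset hn'pos, ← pow_mul, mul_comm, pow_mul, hζ.pow_eq_one, one_pow]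
        · rw [hζ.card_nthRootsFinset,
            Finset.card_image_of_injOn (fun i hi j hj h =>
              hζ.pow_inj (Finset.mem_range.mp hi) (Finset.mem_range.mp hj) h),
            Finset.card_range]
      have hw0 : ζ ≠ 0 := hζ.ne_zero (by omega)
      set w : K := ζ ^ k with hw
      have hwne : w ≠ 1 := by
        intro h1
        exact hk ((hζ.zpow_eq_one_iff_dvd k).mp h1)
      have hsum : ∑ x ∈ Polynomial.nthRootsFinset n' (1 : K), x ^ k
          = ∑ i ∈ Finset.range n', w ^ i := by
        rw [← himg, Finset.sum_image (fun i hi j hj h =>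
          hζ.pow_inj (Finset.mem_range.mp hi) (Finset.mem_range.mp hj) h)]
        refine Finset.sum_congr rfl fun i _ => ?_
        rw [hw, ← zpow_natCast ζ i, ← zpow_mul, ← zpow_natCast (ζ ^ k) i, ← zpow_mul, mul_comm]
      rw [hsum]
      have hgeom := geom_sum_mul w n'
      have hwn : w ^ n' = 1 := by
        rw [hw, ← zpow_natCast (ζ ^ k) n', ← zpow_mul, mul_comm, zpow_mul, zpow_natCast,
          hζ.pow_eq_one, one_zpow]
      rw [hwn, sub_self] at hgeom
      rcases mul_eq_zero.mp hgeom with h | h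
      · exact h
      · exact absurd (by linear_combination h) hwne
    have herase : ∑ x ∈ (Polynomial.nthRootsFinset n' (1 : K)).erase 1, x ^ k = -1 := by
      have := Finset.sum_erase_add (Polynomial.nthRootsFinset n' (1 : K)) (fun x => x ^ k)
        (one_mem_nthRootsFinset hn'pos)
      simp only [hallsum, one_zpow] at this
      linear_combination this
    rw [hprod, ← hsplit, ← hD, ← hO, hDsum, hOsum, herase]
    ring
  -- relate r, n to q, n'
  have hrq : r = q + 1 := by rw [hr, hqdef]
  have hnn' : n = n' := by
    have h1 : (q + 1) * ((q + 1) - 1) = q * (q + 1) := by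
      simp [Nat.add_sub_cancel]; ring
    rw [hn, hrq, hn']
    omega
  set φ : ZMod p →+* K := algebraMap (ZMod p) K with hφ
  have hcast : ((r : ℕ) : ℤ) = (q : ℤ) + 1 := by rw [hrq]; push_cast; ring
  have hfS : ∀ j : ℤ, φ (f j) = S j := by
    have hz := rec_zero (M := K) (q + 1) (by omega) (fun j => φ (f j) - S j) ?_ ?_
    · intro j
      have hj := hz j
      try simp only at hj
      linear_combination hj
    · intro j
      try simp only
      have h1 : ((q + 1 : ℕ) : ℤ) = (q : ℤ) + 1 := by push_cast; ring
      rw [h1]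
      have h2 : f (j + ((q : ℤ) + 1)) = -f j - f (j + 1) := by
        have := hrec j
        rw [hcast] at this
        exact this
      rw [h2, hSrec j, map_sub, map_neg]
      ring
    · intro i h1 h2
      try simp only
      have h1' : ((q + 1 : ℕ) : ℤ) = (q : ℤ) + 1 := by push_cast; ring
      rw [h1'] at h2
      rcases eq_or_lt_of_le h1 with hi0 | hi0
      · rw [← hi0, h0, hS0, map_one, sub_self]
      · have hfi : f i = 0 := hinit i (by omega) (by rw [hcast]; omega)
        rw [hfi, map_zero, hSinit i (by omega) (by omega), sub_self]
  intro k hk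
  have hk' : ¬ ((n' : ℕ) : ℤ) ∣ k := by rwa [← hnn']
  have h1 : φ (f k * f (-k)) = 0 := by
    rw [map_mul, hfS, hfS, hmain k hk']
  have h2 : Function.Injective φ := φ.injective
  have := h1
  rw [← map_zero φ] at this
  exact h2 this
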